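/- Let 0 < a < 1 and Ω := (0,a)² ⊂ ℝ². For j ∈ ℕ define u_j : Ω → ℝ² by u_j(x₁,x₂) := j^{−1/2} (1 − x₂)^j ( sin(j x₁), cos(j x₁) ). Then: (i) u_j → 0 uniformly on Ω as j → ∞; (ii) sup_j ∫_Ω |∇u_j(x)|² dx < +∞; and (iii) lim_{j→∞} ∫_Ω det ∇u_j(x) dx = −a/2. In particular, the functional u ↦ ∫_Ω det ∇u dx is not sequentially weakly lower semicontinuous on W^{1,2}(Ω;ℝ²), since ∫_Ω det ∇0 dx = 0 > −a/2. -/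

import Mathlib

open MeasureTheory Filter Topology Metric Bornology
open scoped ENNReal NNReal

noncomputable section

/-- The (a.e.-defined) gradient of a map `u : ℝⁿ → ℝᵐ`, identified with an `m × n` matrix. -/
def grad {n m : ℕ} (u : EuclideanSpace ℝ (Fin n) → EuclideanSpace ℝ (Fin m))
    (x : EuclideanSpace ℝ (Fin n)) : Matrix (Fin m) (Fin n) ℝ :=
  Matrix.of fun i j => fderiv ℝ u x (EuclideanSpace.single j 1) i

/-- The sequence `u_j(x₁,x₂) = j^{-1/2} (1 - x₂)^j (sin(j x₁), cos(j x₁))`. -/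
def useq (j : ℕ) (x : EuclideanSpace ℝ (Fin 2)) : EuclideanSpace ℝ (Fin 2) :=
  WithLp.toLp 2 fun i => ((j : ℝ) ^ (-(1:ℝ)/2)) * (1 - x 1) ^ j *
    (if i = (0 : Fin 2) then Real.sin (j * x 0) else Real.cos (j * x 0))

abbrev E2 := EuclideanSpace ℝ (Fin 2)

def cj (j : ℕ) : ℝ := (j:ℝ)^(-(1:ℝ)/2)

def trig (i : Fin 2) (s : ℝ) : ℝ := if i = 0 then Real.sin s else Real.cos s
def trig' (i : Fin 2) (s : ℝ) : ℝ := if i = 0 then Real.cos s else -Real.sin s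

def D1 (j : ℕ) (i : Fin 2) (x : E2) : ℝ := cj j * (1 - x 1)^j * (trig' i (j * x 0) * j)
def D2 (j : ℕ) (i : Fin 2) (x : E2) : ℝ := -(cj j * (↑j * (1 - x 1)^(j-1)) * trig i (j * x 0))

lemma hasF_comp (j : ℕ) (i : Fin 2) (x : E2) :
    HasFDerivAt (fun x : E2 => useq j x i)
      (D1 j i x • (EuclideanSpace.proj (0:Fin 2) : E2 →L[ℝ] ℝ) + D2 j i x • (EuclideanSpace.proj (1:Fin 2) : E2 →L[ℝ] ℝ)) x := by
  have h0 : HasFDerivAt (fun x : E2 => x 0) (EuclideanSpace.proj (0:Fin 2) : E2 →L[ℝ] ℝ) x :=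
    (EuclideanSpace.proj (0:Fin 2) : E2 →L[ℝ] ℝ).hasFDerivAt
  have h1 : HasFDerivAt (fun x : E2 => x 1) (EuclideanSpace.proj (1:Fin 2) : E2 →L[ℝ] ℝ) x :=
    (EuclideanSpace.proj (1:Fin 2) : E2 →L[ℝ] ℝ).hasFDerivAt
  have hpow : HasFDerivAt (fun x : E2 => (1 - x 1)^j)
      ((↑j * (1 - x 1)^(j-1)) • -(EuclideanSpace.proj (1:Fin 2) : E2 →L[ℝ] ℝ)) x :=
    (hasDerivAt_pow j (1 - x 1)).comp_hasFDerivAt x (h1.const_sub 1)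
  have harg : HasFDerivAt (fun x : E2 => (j:ℝ) * x 0) ((j:ℝ) • (EuclideanSpace.proj (0:Fin 2) : E2 →L[ℝ] ℝ)) x :=
    h0.const_mul _
  have htrig : HasFDerivAt (fun x : E2 => trig i ((j:ℝ) * x 0))
      (trig' i ((j:ℝ) * x 0) • ((j:ℝ) • (EuclideanSpace.proj (0:Fin 2) : E2 →L[ℝ] ℝ))) x := by
    fin_cases i
    · have h := (Real.hasDerivAt_sin ((j:ℝ) * x 0)).comp_hasFDerivAt x harg
      simp [trig, trig'] at h ⊢
      exact h
    · have h := (Real.hasDerivAt_cos ((j:ℝ) * x 0)).comp_hasFDerivAt x harg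
      simp [trig, trig'] at h ⊢
      exact h
  have hmul := ((hpow.const_mul (cj j)).mul htrig)
  have : (fun x : E2 => useq j x i) = fun x : E2 => (cj j * (1 - x 1)^j) * trig i ((j:ℝ) * x 0) := by
    funext y
    fin_cases i <;> simp [useq, trig, cj, mul_assoc]
  rw [this]
  refine hmul.congr_fderiv ?_
  ext v
  fin_cases i <;>
    simp [D1, D2, trig, trig', ContinuousLinearMap.add_apply, ContinuousLinearMap.smul_apply,
      ContinuousLinearMap.neg_apply, smul_eq_mul] <;> ring

def Dfull (j : ℕ) (x : E2) : E2 →L[ℝ] E2 :=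
  ((PiLp.continuousLinearEquiv 2 ℝ (fun _ : Fin 2 => ℝ)).symm.toContinuousLinearMap).comp
    (ContinuousLinearMap.pi fun i =>
      D1 j i x • (EuclideanSpace.proj (0:Fin 2) : E2 →L[ℝ] ℝ)
        + D2 j i x • (EuclideanSpace.proj (1:Fin 2) : E2 →L[ℝ] ℝ))

lemma hasF_useq (j : ℕ) (x : E2) : HasFDerivAt (useq j) (Dfull j x) x := by
  have h := hasFDerivAt_pi.2 (fun i => hasF_comp j i x)
  exact ((PiLp.continuousLinearEquiv 2 ℝ (fun _ : Fin 2 => ℝ)).symm.toContinuousLinearMap.hasFDerivAt).comp x h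

lemma grad_useq (j : ℕ) (x : E2) (i k : Fin 2) :
    grad (useq j) x i k = if k = 0 then D1 j i x else D2 j i x := by
  have := (hasF_useq j x).fderiv
  rw [grad, Matrix.of_apply, this]
  fin_cases k <;>
    simp [Dfull, ContinuousLinearMap.pi_apply, EuclideanSpace.single_apply,
      ContinuousLinearMap.add_apply, ContinuousLinearMap.smul_apply, smul_eq_mul]

lemma setInt (f : ℝ → ℝ) (hf : Continuous f) {a : ℝ} (ha0 : 0 < a) (ha1 : a < 1) :
    ∫ x in {x : E2 | x 0 ∈ Set.Ioo (0:ℝ) a ∧ x 1 ∈ Set.Ioo (0:ℝ) a}, f (x 1)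
      = a * ∫ t in Set.Ioo (0:ℝ) a, f t := by
  have e1 := EuclideanSpace.volume_preserving_symm_measurableEquiv_toLp (Fin 2)
  have e2 := MeasureTheory.volume_preserving_finTwoArrow ℝ
  have h1 : ∫ x in {x : E2 | x 0 ∈ Set.Ioo (0:ℝ) a ∧ x 1 ∈ Set.Ioo (0:ℝ) a}, f (x 1)
      = ∫ y in {y : Fin 2 → ℝ | y 0 ∈ Set.Ioo (0:ℝ) a ∧ y 1 ∈ Set.Ioo (0:ℝ) a}, f (y 1) := by
    rw [← e1.setIntegral_preimage_emb (MeasurableEquiv.toLp 2 (Fin 2 → ℝ)).symm.measurableEmbedding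
      (fun y => f (y 1))]
    rfl
  have h2 : ∫ y in {y : Fin 2 → ℝ | y 0 ∈ Set.Ioo (0:ℝ) a ∧ y 1 ∈ Set.Ioo (0:ℝ) a}, f (y 1)
      = ∫ p in (Set.Ioo (0:ℝ) a) ×ˢ (Set.Ioo (0:ℝ) a), f p.2 := by
    rw [← e2.setIntegral_preimage_emb (MeasurableEquiv.finTwoArrow).measurableEmbedding
      (fun p => f p.2)]
    rfl
  rw [h1, h2]
  have hint : IntegrableOn (fun p : ℝ × ℝ => f p.2) ((Set.Ioo (0:ℝ) a) ×ˢ (Set.Ioo (0:ℝ) a)) := by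
    apply ((hf.comp continuous_snd).continuousOn.integrableOn_compact
      (isCompact_Icc.prod isCompact_Icc : IsCompact ((Set.Icc (0:ℝ) a) ×ˢ (Set.Icc (0:ℝ) a)))).mono_set
    exact Set.prod_mono Set.Ioo_subset_Icc_self Set.Ioo_subset_Icc_self
  rw [Measure.volume_eq_prod] at hint ⊢
  rw [MeasureTheory.setIntegral_prod _ hint]
  simp [MeasureTheory.setIntegral_const, Real.volume_Ioo, ENNReal.toReal_ofReal ha0.le, smul_eq_mul, ha0.le]

lemma int_pow {a : ℝ} (ha0 : 0 < a) (n : ℕ) :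
    ∫ t in Set.Ioo (0:ℝ) a, (1-t)^n = (1 - (1-a)^(n+1))/(n+1) := by
  rw [← MeasureTheory.integral_Ioc_eq_integral_Ioo,
    ← intervalIntegral.integral_of_le ha0.le,
    intervalIntegral.integral_comp_sub_left (fun s => s^n) 1]
  simp [integral_pow]

lemma energy_eq (j : ℕ) (x : E2) :
    ∑ i, ∑ k, (grad (useq j) x i k)^2
      = (cj j * j)^2 * (((1 - x 1)^j)^2 + ((1 - x 1)^(j-1))^2) := by
  have h := Real.sin_sq_add_cos_sq ((j:ℝ) * x 0)
  simp only [Fin.sum_univ_two, grad_useq]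
  simp only [D1, D2, trig, trig']
  norm_num
  linear_combination ((cj j * (j:ℝ))^2 * (((1 - x 1)^j)^2 + ((1 - x 1)^(j-1))^2)) * h

lemma det_eq (j : ℕ) (x : E2) :
    (grad (useq j) x).det = -((cj j * j)^2) * ((1 - x 1)^j * (1 - x 1)^(j-1)) := by
  have h := Real.sin_sq_add_cos_sq ((j:ℝ) * x 0)
  rw [Matrix.det_fin_two]
  simp only [grad_useq, D1, D2, trig, trig']
  norm_num
  linear_combination (-((cj j * (j:ℝ))^2 * ((1 - x 1)^j * (1 - x 1)^(j-1)))) * h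

lemma intg {a : ℝ} (n : ℕ) : IntegrableOn (fun t : ℝ => (1-t)^n) (Set.Ioo 0 a) := by
  apply (((continuous_const.sub continuous_id).pow n).continuousOn.integrableOn_compact
    isCompact_Icc).mono_set Set.Ioo_subset_Icc_self

lemma int_comb {a : ℝ} (ha0 : 0 < a) (c : ℝ) (m n : ℕ) :
    ∫ t in Set.Ioo (0:ℝ) a, c * ((1-t)^m + (1-t)^n)
      = c * ((1 - (1-a)^(m+1))/(m+1) + (1 - (1-a)^(n+1))/(n+1)) := by
  rw [MeasureTheory.integral_const_mul, MeasureTheory.integral_add (intg m) (intg n),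
    int_pow ha0, int_pow ha0]

lemma int_comb1 {a : ℝ} (ha0 : 0 < a) (c : ℝ) (n : ℕ) :
    ∫ t in Set.Ioo (0:ℝ) a, c * (1-t)^n = c * ((1 - (1-a)^(n+1))/(n+1)) := by
  rw [MeasureTheory.integral_const_mul, int_pow ha0]

lemma cj_sq {j : ℕ} (hj : 1 ≤ j) : (cj j * j)^2 = j := by
  have hj' : (0:ℝ) < j := by exact_mod_cast hj
  have key : ((j:ℝ)^(-(1:ℝ)/2))^(2:ℕ) = (j:ℝ)^(-(1:ℝ)) := by
    rw [← Real.rpow_natCast ((j:ℝ)^(-(1:ℝ)/2)) 2, ← Real.rpow_mul hj'.le]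
    norm_num
  rw [mul_pow, cj, key, Real.rpow_neg_one]
  field_simp

lemma energy_int {a : ℝ} (ha0 : 0 < a) (ha1 : a < 1) (j : ℕ) :
    ∫ x in {x : E2 | x 0 ∈ Set.Ioo (0:ℝ) a ∧ x 1 ∈ Set.Ioo (0:ℝ) a},
        ∑ i, ∑ k, (grad (useq j) x i k)^2
      = a * ((cj j * j)^2 * ((1 - (1-a)^(j*2+1))/(((j*2 : ℕ):ℝ)+1) + (1 - (1-a)^((j-1)*2+1))/((((j-1)*2 : ℕ):ℝ)+1))) := by
  simp only [energy_eq, ← pow_mul]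
  rw [setInt (fun t => (cj j * j)^2 * ((1-t)^(j*2) + (1-t)^((j-1)*2)))
    (by continuity) ha0 ha1, int_comb ha0]

lemma det_int {a : ℝ} (ha0 : 0 < a) (ha1 : a < 1) (j : ℕ) :
    ∫ x in {x : E2 | x 0 ∈ Set.Ioo (0:ℝ) a ∧ x 1 ∈ Set.Ioo (0:ℝ) a}, (grad (useq j) x).det
      = a * (-((cj j * j)^2) * ((1 - (1-a)^((j+(j-1))+1))/(((j+(j-1) : ℕ):ℝ)+1)) ) := by
  simp only [det_eq, ← pow_add]
  rw [setInt (fun t => -((cj j * j)^2) * (1-t)^(j+(j-1))) (by continuity) ha0 ha1,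
    int_comb1 ha0]

lemma det_int_closed {a : ℝ} (ha0 : 0 < a) (ha1 : a < 1) (j : ℕ) :
    ∫ x in {x : E2 | x 0 ∈ Set.Ioo (0:ℝ) a ∧ x 1 ∈ Set.Ioo (0:ℝ) a}, (grad (useq j) x).det
      = -(a/2) * (1 - (1-a)^(2*j)) := by
  rw [det_int ha0 ha1 j]
  rcases Nat.eq_zero_or_pos j with h | h
  · subst h; simp [cj]
  · have hj : 1 ≤ j := h
    have hjR : (1:ℝ) ≤ (j:ℝ) := by exact_mod_cast hj
    rw [cj_sq hj]
    have hexp : j + (j-1) + 1 = 2*j := by omega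
    have hden : (((j + (j-1) : ℕ)):ℝ) + 1 = 2*(j:ℝ) := by
      push_cast [Nat.cast_sub hj]; ring
    rw [hexp, hden]
    have hj' : (j:ℝ) ≠ 0 := by linarith
    field_simp

lemma det_tendsto {a : ℝ} (ha0 : 0 < a) (ha1 : a < 1) :
    Tendsto (fun j : ℕ => ∫ x in {x : E2 | x 0 ∈ Set.Ioo (0:ℝ) a ∧ x 1 ∈ Set.Ioo (0:ℝ) a},
      (grad (useq j) x).det) atTop (nhds (-a/2)) := by
  simp only [det_int_closed ha0 ha1]
  have hpow : Tendsto (fun j : ℕ => (1-a)^(2*j)) atTop (nhds 0) :=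
    (tendsto_pow_atTop_nhds_zero_of_lt_one (by linarith) (by linarith)).comp
      (by
      have : Tendsto (fun j : ℕ => 2*j) atTop atTop :=
        tendsto_atTop_mono (f := id) (fun n => by simp; omega) tendsto_id
      exact this)
  have h := (tendsto_const_nhds (x := (1:ℝ)) (f := atTop (α := ℕ)) |>.sub hpow).const_mul (-(a/2))
  have he : -a/2 = -(a/2)*(1-0) := by ring
  rw [he]
  exact h

lemma energy_bound {a : ℝ} (ha0 : 0 < a) (ha1 : a < 1) (j : ℕ) :
    ∫ x in {x : E2 | x 0 ∈ Set.Ioo (0:ℝ) a ∧ x 1 ∈ Set.Ioo (0:ℝ) a},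
        ∑ i, ∑ k, (grad (useq j) x i k)^2 ≤ 2*a := by
  rw [energy_int ha0 ha1 j]
  rcases Nat.eq_zero_or_pos j with h | h
  · subst h; simp [cj]; linarith
  · have hj : 1 ≤ j := h
    have hjR : (1:ℝ) ≤ (j:ℝ) := by exact_mod_cast hj
    rw [cj_sq hj]
    have e1 : ((j*2 : ℕ):ℝ) = 2*(j:ℝ) := by push_cast; ring
    have e2 : (((j-1)*2 : ℕ):ℝ) = 2*(j:ℝ) - 2 := by push_cast [Nat.cast_sub hj]; ring
    rw [e1, e2]
    have hp1 : 0 ≤ (1-a)^(j*2+1) := pow_nonneg (by linarith) _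
    have hp2 : 0 ≤ (1-a)^((j-1)*2+1) := pow_nonneg (by linarith) _
    have hA : (j:ℝ) * ((1 - (1-a)^(j*2+1))/(2*(j:ℝ)+1)) ≤ 1 := by
      rw [mul_div_assoc'] at *
      rw [div_le_one (by linarith)]
      nlinarith
    have hB : (j:ℝ) * ((1 - (1-a)^((j-1)*2+1))/(2*(j:ℝ)-2+1)) ≤ 1 := by
      rw [mul_div_assoc'] at *
      rw [div_le_one (by linarith)]
      nlinarith
    nlinarith

lemma useq_norm_le {a : ℝ} (ha1 : a < 1) (j : ℕ) (x : E2)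
    (hx : x ∈ {x : E2 | x 0 ∈ Set.Ioo (0:ℝ) a ∧ x 1 ∈ Set.Ioo (0:ℝ) a}) :
    ‖useq j x‖ ≤ cj j := by
  obtain ⟨hx0, hx1⟩ := hx
  have h1 : 0 ≤ 1 - x 1 := by have := hx1.2; simp at *; linarith
  have h2 : 1 - x 1 ≤ 1 := by have := hx1.1; simp at *; linarith
  have hc : 0 ≤ cj j := Real.rpow_nonneg (Nat.cast_nonneg j) _
  have hs := Real.sin_sq_add_cos_sq ((j:ℝ) * x 0)
  have hnorm : ‖useq j x‖ = |cj j * (1 - x 1)^j| := by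
    rw [EuclideanSpace.norm_eq]
    have : ∑ i, ‖useq j x i‖^2 = (cj j * (1 - x 1)^j)^2 := by
      simp only [Fin.sum_univ_two, useq, Real.norm_eq_abs, sq_abs, cj,
        if_pos rfl, if_neg (by decide : ¬ (1 : Fin 2) = 0), if_true]
      linear_combination (((j : ℝ) ^ (-(1:ℝ)/2)) * (1 - x 1)^j)^2 * hs
    rw [this, Real.sqrt_sq_eq_abs]
  rw [hnorm, abs_of_nonneg (by positivity)]
  calc cj j * (1 - x 1)^j ≤ cj j * 1 := by
        gcongr
        exact pow_le_one₀ h1 h2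
    _ = cj j := mul_one _

lemma useq_unif {a : ℝ} (ha0 : 0 < a) (ha1 : a < 1) :
    TendstoUniformlyOn useq 0 atTop
      {x : E2 | x 0 ∈ Set.Ioo (0:ℝ) a ∧ x 1 ∈ Set.Ioo (0:ℝ) a} := by
  rw [Metric.tendstoUniformlyOn_iff]
  intro ε hε
  have hc : Tendsto (fun j : ℕ => cj j) atTop (nhds 0) := by
    have h := tendsto_rpow_neg_atTop (y := (1:ℝ)/2) (by norm_num)
    have : (fun j : ℕ => cj j) = (fun x : ℝ => x ^ (-((1:ℝ)/2))) ∘ (fun j : ℕ => (j:ℝ)) := by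
      funext j; simp [cj]; norm_num
    rw [this]
    exact h.comp tendsto_natCast_atTop_atTop
  filter_upwards [hc.eventually_lt_const hε] with j hj x hx
  have := useq_norm_le ha1 j x hx
  calc dist ((0 : ℕ → E2 → E2) j x) (useq j x) = ‖useq j x‖ := by simp [dist_eq_norm]
    _ ≤ cj j := this
    _ < ε := hj

/-- Murat's example: on `Ω = (0,a)²` with `0 < a < 1`, the maps `u_j` (i) converge to `0`
uniformly on `Ω`, (ii) have uniformly bounded Dirichlet energies
`∫_Ω |∇u_j|² dx` (Frobenius norm squared), and (iii)
`∫_Ω det ∇u_j dx → −a/2`; in particular `u ↦ ∫_Ω det ∇u` is not sequentially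
weakly lower semicontinuous on `W^{1,2}(Ω;ℝ²)` since `∫_Ω det ∇0 = 0 > −a/2`. -/
theorem stmt5 (a : ℝ) (ha0 : 0 < a) (ha1 : a < 1)
    (Ω : Set (EuclideanSpace ℝ (Fin 2)))
    (hΩ : Ω = {x | x 0 ∈ Set.Ioo (0:ℝ) a ∧ x 1 ∈ Set.Ioo (0:ℝ) a}) :
    TendstoUniformlyOn useq 0 atTop Ω ∧
    (∃ M : ℝ, ∀ j : ℕ, (∫ x in Ω, ∑ i, ∑ k, (grad (useq j) x i k) ^ 2) ≤ M) ∧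
    Tendsto (fun j : ℕ => ∫ x in Ω, (grad (useq j) x).det) atTop (nhds (-a/2)) := by
  subst hΩ
  exact ⟨useq_unif ha0 ha1, ⟨2*a, fun j => energy_bound ha0 ha1 j⟩, det_tendsto ha0 ha1⟩
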